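/- Let G=(V,E) be a finite simple graph. Then ffn(G) = 2 if and only if G has at least one edge and every connected component of G is a caterpillar graph. -/

import Mathlib

open scoped Classical
noncomputable section

variable {V : Type*}

/-- The neighbourhood of a set of vertices: all vertices outside `S` adjacent to some
vertex of `S`. -/
def nbhd [Fintype V] (G : SimpleGraph V) (S : Finset V) : Finset V :=
  Finset.univ.filter fun v => v ∉ S ∧ ∃ u ∈ S, G.Adj u v

/-- The burning sets of a strategy `F` (where `F i` is the firefighter set at time `i`):
`B 0 = V` and `B (t+1) = (B t \ F (t+1)) ∪ N(B t \ F (t+1))`. -/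
def burn [Fintype V] (G : SimpleGraph V) (F : ℕ → Finset V) : ℕ → Finset V
  | 0 => Finset.univ
  | t + 1 => (burn G F t \ F (t + 1)) ∪ nbhd G (burn G F t \ F (t + 1))

/-- `F` is a `T`-winning `m`-strategy for `G`. -/
def WinningStrategy [Fintype V] (G : SimpleGraph V) (m T : ℕ) (F : ℕ → Finset V) : Prop :=
  (∀ i, (F i).card ≤ m) ∧ burn G F T = ∅

/-- The firefighter number of `G`: the least `m` admitting a winning `m`-strategy. -/
def ffn [Fintype V] (G : SimpleGraph V) : ℕ :=
  sInf {m | ∃ T F, WinningStrategy G m T F}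


/-- A caterpillar graph: a tree in which all vertices are within distance 1 of a
central path. -/
def IsCaterpillar {W : Type*} (H : SimpleGraph W) : Prop :=
  H.IsTree ∧ ∃ (u v : W) (p : H.Walk u v), p.IsPath ∧
    ∀ w : W, ∃ x ∈ p.support, H.dist w x ≤ 1

open SimpleGraph

lemma mem_nbhd [Fintype V] {G : SimpleGraph V} {S : Finset V} {v : V} :
    v ∈ nbhd G S ↔ v ∉ S ∧ ∃ u ∈ S, G.Adj u v := by simp [nbhd]

lemma winnable_mono [Fintype V] {G : SimpleGraph V} {m m' : ℕ} (h : m ≤ m')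
    (hw : ∃ T F, WinningStrategy G m T F) : ∃ T F, WinningStrategy G m' T F := by
  obtain ⟨T, F, h1, h2⟩ := hw
  exact ⟨T, F, fun i => (h1 i).trans h, h2⟩

lemma winnable_card [Fintype V] (G : SimpleGraph V) :
    ∃ T F, WinningStrategy G (Fintype.card V) T F := by
  refine ⟨1, fun _ => Finset.univ, fun i => le_of_eq (Finset.card_univ), ?_⟩
  simp only [burn]
  rw [Finset.sdiff_self]
  simp [nbhd, Finset.eq_empty_iff_forall_notMem]

/-- With no edges, one firefighter suffices. -/
lemma winnable_one_of_no_edge [Fintype V] (G : SimpleGraph V) (h : G.edgeSet = ∅) :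
    ∃ T F, WinningStrategy G 1 T F := by
  have hadj : ∀ u v : V, ¬ G.Adj u v := by
    intro u v huv
    have : s(u, v) ∈ G.edgeSet := huv
    simp [h] at this
  have hnbhd : ∀ S : Finset V, nbhd G S = ∅ := by
    intro S
    ext v
    simp only [mem_nbhd, Finset.notMem_empty, iff_false]
    rintro ⟨-, u, -, huv⟩
    exact hadj u v huv
  set n := Fintype.card V
  have e : V ≃ Fin n := Fintype.equivFin V
  refine ⟨n, fun i => if h : i - 1 < n then {e.symm ⟨i - 1, h⟩} else ∅, ?_, ?_⟩
  · intro i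
    by_cases h : i - 1 < n <;> simp [h]
  · have key : ∀ t, ∀ v ∈ burn G (fun i => if h : i - 1 < n then {e.symm ⟨i - 1, h⟩} else ∅) t,
        t ≤ (e v : ℕ) := by
      intro t
      induction t with
      | zero => intro v _; exact Nat.zero_le _
      | succ t ih =>
        intro v hv
        simp only [burn, hnbhd, Finset.union_empty, Finset.mem_sdiff] at hv
        obtain ⟨hvB, hvF⟩ := hv
        have h1 : t ≤ (e v : ℕ) := ih v hvB
        rcases Nat.lt_or_ge t n with htn | htn
        · have : v ≠ e.symm ⟨t, htn⟩ := by
            intro hne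
            apply hvF
            simp only [Nat.add_sub_cancel, dif_pos htn]
            simp [hne]
          rcases Nat.lt_or_ge t (e v : ℕ) with h2 | h2
          · exact h2
          · exfalso
            apply this
            have : (e v : ℕ) = t := le_antisymm h2 h1
            have : e v = ⟨t, htn⟩ := Fin.ext this
            rw [← this]; simp
        · exact absurd ((e v).2.trans_le htn) (Nat.not_lt.mpr h1)
    rw [Finset.eq_empty_iff_forall_notMem]
    intro v hv
    exact absurd (key n v hv) (Nat.not_le.mpr (e v).2)

/-- With an edge present, one firefighter is not enough. -/
lemma not_winnable_one_of_edge [Fintype V] (G : SimpleGraph V) (h : G.edgeSet.Nonempty) :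
    ¬ ∃ T F, WinningStrategy G 1 T F := by
  rintro ⟨T, F, hcard, hemp⟩
  obtain ⟨e, he⟩ := h
  induction e with
  | h x y =>
    rw [SimpleGraph.mem_edgeSet] at he
    have key : ∀ t, x ∈ burn G F t ∧ y ∈ burn G F t := by
      intro t
      induction t with
      | zero => simp [burn]
      | succ t ih =>
        obtain ⟨hx, hy⟩ := ih
        have hne : x ≠ y := G.ne_of_adj he
        have hcases : x ∉ F (t+1) ∨ y ∉ F (t+1) := by
          by_contra hc
          push_neg at hc
          have hsub : ({x, y} : Finset V) ⊆ F (t+1) := by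
            intro z hz
            simp only [Finset.mem_insert, Finset.mem_singleton] at hz
            rcases hz with rfl | rfl
            exacts [hc.1, hc.2]
          have : ({x, y} : Finset V).card ≤ 1 := le_trans (Finset.card_le_card hsub) (hcard (t+1))
          rw [Finset.card_pair hne] at this
          omega
        have main : ∀ a b : V, G.Adj a b → a ∈ burn G F t → b ∈ burn G F t →
            a ∉ F (t+1) → a ∈ burn G F (t+1) ∧ b ∈ burn G F (t+1) := by
          intro a b hab ha hb haF
          have haB : a ∈ burn G F t \ F (t+1) := Finset.mem_sdiff.mpr ⟨ha, haF⟩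
          constructor
          · exact Finset.mem_union_left _ haB
          · by_cases hbB : b ∈ burn G F t \ F (t+1)
            · exact Finset.mem_union_left _ hbB
            · refine Finset.mem_union_right _ (mem_nbhd.mpr ⟨hbB, a, haB, hab⟩)
        rcases hcases with hxF | hyF
        · exact main x y he hx hy hxF
        · exact (main y x he.symm hy hx hyF).symm
    have := (key T).1
    rw [hemp] at this
    simp at this

/-- A "good" sweeping order: no duplicates, and each prefix has at most one
vertex outside it adjacent to it. -/
def GoodL (G : SimpleGraph V) (L : List V) : Prop :=
  L.Nodup ∧ ∀ i : ℕ, Set.Subsingleton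
    {v | v ∉ L.take i ∧ ∃ u ∈ L.take i, G.Adj u v}

/-- A good order covering all vertices yields a winning 2-strategy. -/
lemma winnable_two_of_goodL [Fintype V] (G : SimpleGraph V) (L : List V)
    (hL : GoodL G L) (hcov : ∀ v : V, v ∈ L) :
    ∃ T F, WinningStrategy G 2 T F := by
  obtain ⟨hnd, hss⟩ := hL
  set F : ℕ → Finset V := fun i =>
    if i = 0 then ∅ else
      ((L.take i).toFinset \ (L.take (i-1)).toFinset) ∪ nbhd G (L.take i).toFinset with hF
  refine ⟨L.length, F, ?_, ?_⟩
  · intro i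
    rcases i with - | j
    · simp [hF]
    · have h1 : ((L.take (j+1)).toFinset \ (L.take j).toFinset).card ≤ 1 := by
        apply Finset.card_le_one.mpr
        intro a ha b hb
        simp only [Finset.mem_sdiff, List.mem_toFinset] at ha hb
        rw [List.take_succ] at ha hb
        have ha' := ha.1
        have hb' := hb.1
        rw [List.mem_append] at ha' hb'
        rcases ha' with h | h
        · exact absurd h ha.2
        · rcases hb' with h' | h'
          · exact absurd h' hb.2
          · cases hj : L[j]? with
            | none => rw [hj] at h; simp at h
            | some c =>
              rw [hj] at h h'
              simp only [Option.toList_some, List.mem_singleton] at h h'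
              rw [h, h']
      have h2 : (nbhd G (L.take (j+1)).toFinset).card ≤ 1 := by
        apply Finset.card_le_one.mpr
        intro a ha b hb
        rw [mem_nbhd] at ha hb
        apply hss (j+1)
        · simp only [Set.mem_setOf_eq, List.mem_toFinset] at ha ⊢
          exact ⟨ha.1, by simpa using ha.2⟩
        · simp only [Set.mem_setOf_eq, List.mem_toFinset] at hb ⊢
          exact ⟨hb.1, by simpa using hb.2⟩
      calc (F (j+1)).card ≤ _ + _ := by rw [hF]; simpa using Finset.card_union_le _ _
        _ ≤ 2 := by omega
  · have key : ∀ t, ∀ v ∈ burn G F t, v ∉ L.take t := by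
      intro t
      induction t with
      | zero => intro v _; simp
      | succ t ih =>
        have hBF : ∀ u ∈ burn G F t \ F (t+1), u ∉ L.take (t+1) := by
          intro u hu hmem
          rw [Finset.mem_sdiff] at hu
          have hut : u ∉ L.take t := ih u hu.1
          apply hu.2
          have : u ∈ (L.take (t+1)).toFinset \ (L.take t).toFinset := by
            simp only [Finset.mem_sdiff, List.mem_toFinset]
            exact ⟨hmem, hut⟩
          simp only [hF, if_neg (Nat.succ_ne_zero t)]
          simp only [Nat.add_sub_cancel]
          exact Finset.mem_union_left _ this
        intro v hv
        simp only [burn, Finset.mem_union] at hv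
        rcases hv with hv | hv
        · exact hBF v hv
        · rw [mem_nbhd] at hv
          obtain ⟨hvB, u, hu, huv⟩ := hv
          intro hmem
          have huT : u ∉ L.take (t+1) := hBF u hu
          have : u ∈ nbhd G (L.take (t+1)).toFinset := by
            rw [mem_nbhd]
            refine ⟨by simpa using huT, v, by simpa using hmem, huv.symm⟩
          have : u ∈ F (t+1) := by
            simp only [hF, if_neg (Nat.succ_ne_zero t)]
            exact Finset.mem_union_right _ this
          rw [Finset.mem_sdiff] at hu
          exact hu.2 this
    rw [Finset.eq_empty_iff_forall_notMem]
    intro v hv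
    exact key L.length v hv (by simpa using hcov v)

/-- Appending a good list for an adjacency-closed set to another good list. -/
lemma GoodL.append {G : SimpleGraph V} {L1 L2 : List V}
    (h1 : GoodL G L1) (h2 : GoodL G L2)
    (hdisj : ∀ v ∈ L1, v ∉ L2)
    (hclosed : ∀ u ∈ L1, ∀ v, G.Adj u v → v ∈ L1) :
    GoodL G (L1 ++ L2) := by
  constructor
  · rw [List.nodup_append]
    exact ⟨h1.1, h2.1, fun a ha b hb hab => hdisj a ha (by rw [hab]; exact hb)⟩
  · intro i
    rw [List.take_append]
    rcases le_or_gt i L1.length with hle | hlt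
    · have : i - L1.length = 0 := Nat.sub_eq_zero_of_le hle
      rw [this, List.take_zero, List.append_nil]
      intro a ha b hb
      simp only [Set.mem_setOf_eq] at ha hb
      obtain ⟨ha1, u, hu, hau⟩ := ha
      obtain ⟨hb1, w, hw, hbw⟩ := hb
      exact h1.2 i ⟨ha1, u, hu, hau⟩ ⟨hb1, w, hw, hbw⟩
    · have hfull : L1.take i = L1 := List.take_of_length_le (le_of_lt hlt)
      rw [hfull]
      intro a ha b hb
      simp only [Set.mem_setOf_eq, List.mem_append] at ha hb
      obtain ⟨ha1, u, hu, hau⟩ := ha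
      obtain ⟨hb1, w, hw, hbw⟩ := hb
      push_neg at ha1 hb1
      have hu2 : u ∈ L2.take (i - L1.length) := by
        rcases hu with hu | hu
        · exact absurd (hclosed u hu a hau) ha1.1
        · exact hu
      have hw2 : w ∈ L2.take (i - L1.length) := by
        rcases hw with hw | hw
        · exact absurd (hclosed w hw b hbw) hb1.1
        · exact hw
      exact h2.2 (i - L1.length) ⟨ha1.2, u, hu2, hau⟩ ⟨hb1.2, w, hw2, hbw⟩

/-- Transfer a good list on an induced subgraph (on an adjacency-closed set) to the
ambient graph. -/
lemma GoodL.map_val {G : SimpleGraph V} {s : Set V} {L' : List ↥s}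
    (h : GoodL (G.induce s) L')
    (hclosed : ∀ u ∈ s, ∀ v, G.Adj u v → v ∈ s) :
    GoodL G (L'.map Subtype.val) := by
  constructor
  · exact h.1.map Subtype.val_injective
  · intro i
    rw [← List.map_take]
    intro a ha b hb
    simp only [Set.mem_setOf_eq, List.mem_map] at ha hb
    obtain ⟨ha1, u, hu, hau⟩ := ha
    obtain ⟨hb1, w, hw, hbw⟩ := hb
    obtain ⟨u', hu', rfl⟩ := hu
    obtain ⟨w', hw', rfl⟩ := hw
    have has : a ∈ s := hclosed _ u'.2 a hau
    have hbs : b ∈ s := hclosed _ w'.2 b hbw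
    have : (⟨a, has⟩ : ↥s) = ⟨b, hbs⟩ := by
      apply h.2 i
      · exact ⟨fun hc => ha1 ⟨_, hc, rfl⟩, u', hu', hau⟩
      · exact ⟨fun hc => hb1 ⟨_, hc, rfl⟩, w', hw', hbw⟩
    exact congrArg Subtype.val this

/-- Cycle obstruction: a nonempty set in which every vertex has two distinct
neighbours inside the set burns forever against 2 firefighters. -/
lemma not_winnable_two_of_robust [Fintype V] (G : SimpleGraph V) (C : Finset V)
    (hne : C.Nonempty)
    (h2 : ∀ x ∈ C, ∃ y ∈ C, ∃ z ∈ C, y ≠ z ∧ G.Adj x y ∧ G.Adj x z) :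
    ¬ ∃ T F, WinningStrategy G 2 T F := by
  rintro ⟨T, F, hcard, hemp⟩
  have key : ∀ t, C ⊆ burn G F t := by
    intro t
    induction t with
    | zero => intro x _; simp [burn]
    | succ t ih =>
      intro x hx
      simp only [burn, Finset.mem_union]
      by_cases hxF : x ∈ F (t+1)
      · obtain ⟨y, hy, z, hz, hyz, hxy, hxz⟩ := h2 x hx
        have hyx : y ≠ x := fun h => G.ne_of_adj hxy h.symm
        have hzx : z ≠ x := fun h => G.ne_of_adj hxz h.symm
        have : y ∉ F (t+1) ∨ z ∉ F (t+1) := by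
          by_contra hc
          push_neg at hc
          have hsub : ({x, y, z} : Finset V) ⊆ F (t+1) := by
            intro w hw
            simp only [Finset.mem_insert, Finset.mem_singleton] at hw
            rcases hw with rfl | rfl | rfl
            exacts [hxF, hc.1, hc.2]
          have h3 : ({x, y, z} : Finset V).card = 3 := by
            rw [Finset.card_insert_of_notMem (by simp [Ne.symm hyx, Ne.symm hzx]),
              Finset.card_pair hyz]
          have := (Finset.card_le_card hsub).trans (hcard (t+1))
          omega
        rcases this with hyF | hzF
        · refine Or.inr (mem_nbhd.mpr ⟨?_, y, Finset.mem_sdiff.mpr ⟨ih hy, hyF⟩, hxy.symm⟩)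
          simp [hxF]
        · refine Or.inr (mem_nbhd.mpr ⟨?_, z, Finset.mem_sdiff.mpr ⟨ih hz, hzF⟩, hxz.symm⟩)
          simp [hxF]
      · exact Or.inl (Finset.mem_sdiff.mpr ⟨ih hx, hxF⟩)
  obtain ⟨x, hx⟩ := hne
  have := key T hx
  rw [hemp] at this
  simp at this

/-! ### The spider obstruction -/

/-- Adjacency of the spider `S(2,2,2)`: centre `0`, middles `1,2,3`, tips `4,5,6`. -/
def spAdj : Fin 7 → Fin 7 → Prop := fun x y =>
  (x, y) ∈ [((0:Fin 7),(1:Fin 7)),(1,0),(0,2),(2,0),(0,3),(3,0),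
    (1,4),(4,1),(2,5),(5,2),(3,6),(6,3)]

instance : DecidableRel spAdj := fun x y => by unfold spAdj; infer_instance

/-- The trap family for the spider. -/
def spTraps : List (Finset (Fin 7)) :=
  [{0,1,2,3},{0,1,2,6},{0,1,3,5},{0,2,3,4},{0,1,2,4,5},{0,1,3,4,6},{0,1,4,5,6},
   {0,2,3,5,6},{0,2,4,5,6},{0,3,4,5,6},{1,2,3,4,5},{1,2,3,4,6},{1,2,3,5,6},
   {1,2,4,5,6},{1,3,4,5,6},{2,3,4,5,6}]

lemma spTraps_closed : ∀ A ∈ spTraps, ∀ Fs : Finset (Fin 7), Fs.card ≤ 2 →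
    ∃ A' ∈ spTraps, A'.Nonempty ∧ ∀ y ∈ A', y ∈ A \ Fs ∨ ∃ x ∈ A \ Fs, spAdj x y := by
  set_option maxRecDepth 10000 in decide

/-- Spider obstruction: if `G` contains a (not necessarily induced) copy of the
spider `S(2,2,2)`, two firefighters cannot win. -/
lemma not_winnable_two_of_spider [Fintype V] (G : SimpleGraph V) (ι : Fin 7 → V)
    (hinj : Function.Injective ι) (hadj : ∀ x y, spAdj x y → G.Adj (ι x) (ι y)) :
    ¬ ∃ T F, WinningStrategy G 2 T F := by
  rintro ⟨T, F, hcard, hemp⟩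
  have key : ∀ t, ∃ A ∈ spTraps, ∀ y ∈ A, ι y ∈ burn G F t := by
    intro t
    induction t with
    | zero => exact ⟨{0,1,2,3}, by simp [spTraps], fun y _ => by simp [burn]⟩
    | succ t ih =>
      obtain ⟨A, hA, hAB⟩ := ih
      set Fs : Finset (Fin 7) := Finset.univ.filter (fun x => ι x ∈ F (t+1)) with hFs
      have hFscard : Fs.card ≤ 2 := by
        have : Fs.card = (Fs.image ι).card := (Finset.card_image_of_injective _ hinj).symm
        rw [this]
        refine le_trans (Finset.card_le_card ?_) (hcard (t+1))
        intro v hv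
        simp only [Finset.mem_image] at hv
        obtain ⟨x, hx, rfl⟩ := hv
        simp only [hFs, Finset.mem_filter] at hx
        exact hx.2
      obtain ⟨A', hA', -, hstep⟩ := spTraps_closed A hA Fs hFscard
      refine ⟨A', hA', fun y hy => ?_⟩
      have hιnotF : ∀ x : Fin 7, x ∉ Fs → ι x ∉ F (t+1) := by
        intro x hx h
        exact hx (by simp [hFs, h])
      rcases hstep y hy with hmem | ⟨x, hx, hxy⟩
      · rw [Finset.mem_sdiff] at hmem
        have : ι y ∈ burn G F t \ F (t+1) :=
          Finset.mem_sdiff.mpr ⟨hAB y hmem.1, hιnotF y hmem.2⟩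
        exact Finset.mem_union_left _ this
      · rw [Finset.mem_sdiff] at hx
        have hxB : ι x ∈ burn G F t \ F (t+1) :=
          Finset.mem_sdiff.mpr ⟨hAB x hx.1, hιnotF x hx.2⟩
        by_cases hyB : ι y ∈ burn G F t \ F (t+1)
        · exact Finset.mem_union_left _ hyB
        · exact Finset.mem_union_right _ (mem_nbhd.mpr ⟨hyB, ι x, hxB, hadj x y hxy⟩)
  obtain ⟨A, hA, hAB⟩ := key T
  have hAne : A.Nonempty := by
    fin_cases hA <;> simp
  obtain ⟨y, hy⟩ := hAne
  have := hAB y hy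
  rw [hemp] at this
  simp at this

section TreePart

variable {W : Type*} {H : SimpleGraph W}

lemma exists_path_support_subset {u v x y : W} (p : H.Walk u v) (_ : p.IsPath)
    (hx : x ∈ p.support) (hy : y ∈ p.support) :
    ∃ r : H.Walk x y, r.IsPath ∧ ∀ t ∈ r.support, t ∈ p.support := by
  refine ⟨((p.takeUntil x hx).reverse.append (p.takeUntil y hy)).bypass,
    SimpleGraph.Walk.bypass_isPath _, fun t ht => ?_⟩
  have h1 := SimpleGraph.Walk.support_bypass_subset _ ht
  rw [SimpleGraph.Walk.support_append] at h1
  rcases List.mem_append.mp h1 with h | h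
  · rw [SimpleGraph.Walk.support_reverse, List.mem_reverse] at h
    exact SimpleGraph.Walk.support_takeUntil_subset _ hx h
  · exact SimpleGraph.Walk.support_takeUntil_subset _ hy (List.mem_of_mem_tail h)

lemma adj_head_eq_snd (hac : H.IsAcyclic) {x y b v : W} (h : H.Adj x y)
    (q : H.Walk y b) (hq : (q.cons h).IsPath) (hv : v ∈ (q.cons h).support)
    (hadj : H.Adj x v) : v = y := by
  have htu : ((q.cons h).takeUntil v hv).IsPath := hq.takeUntil hv
  have hsing : (SimpleGraph.Path.singleton hadj : H.Walk x v) =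
      (q.cons h).takeUntil v hv := by
    have := hac.path_unique (SimpleGraph.Path.singleton hadj) ⟨_, htu⟩
    exact congrArg Subtype.val this
  have hlen : ((q.cons h).takeUntil v hv).length = 1 := by
    rw [← hsing]; rfl
  have hgv : ((q.cons h).takeUntil v hv).append ((q.cons h).dropUntil v hv) = q.cons h :=
    SimpleGraph.Walk.take_spec (q.cons h) hv
  have h1 : (q.cons h).getVert 1 = y := (SimpleGraph.Walk.getVert_cons_succ (n := 0) q h).trans q.getVert_zero
  rw [← hgv, SimpleGraph.Walk.getVert_append] at h1
  rw [hlen] at h1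
  simpa using h1

section Caterpillar

variable [Fintype W]

/-- Off-spine neighbours of `x`. -/
def offsL (H : SimpleGraph W) (spine : List W) (x : W) : List W :=
  (Finset.univ.filter fun w => w ∉ spine ∧ H.Adj x w).toList

lemma mem_offsL {spine : List W} {x w : W} :
    w ∈ offsL H spine x ↔ w ∉ spine ∧ H.Adj x w := by
  simp [offsL]

/-- A block: the off-spine neighbours of `x` followed by `x`. -/
def blockL (H : SimpleGraph W) (spine : List W) (x : W) : List W :=
  offsL H spine x ++ [x]

/-- The spine-chain condition used to sweep through a caterpillar. -/
def SpOK (H : SimpleGraph W) (spine : List W) : List W → Set W → Prop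
  | [], _ => True
  | x :: rest, D => (∀ v, H.Adj x v → v ∈ D ∨ v ∈ offsL H spine x ∨ rest.head? = some v) ∧
      SpOK H spine rest (D ∪ {w | w ∈ blockL H spine x})

/-- Main sweeping lemma: boundaries of prefixes are subsingletons. -/
lemma spok_guard (spine : List W) :
    ∀ (xs : List W) (D : Set W),
    (∀ u ∈ D, ∀ v, H.Adj u v → v ∈ D ∨ xs.head? = some v) →
    (∀ x ∈ xs, ∀ w' ∈ offsL H spine x, ∀ v, H.Adj w' v → v = x) →
    SpOK H spine xs D →
    ∀ i, Set.Subsingleton {v | v ∉ D ∪ {w | w ∈ (xs.flatMap (blockL H spine)).take i} ∧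
      ∃ u ∈ D ∪ {w | w ∈ (xs.flatMap (blockL H spine)).take i}, H.Adj u v} := by
  intro xs
  induction xs with
  | nil =>
    intro D hD _ _ i
    intro a ha b hb
    exfalso
    simp only [List.flatMap_nil, List.take_nil, Set.mem_setOf_eq] at ha
    obtain ⟨ha1, u, hu, hadj⟩ := ha
    rcases hu with hu | hu
    · rcases hD u hu _ hadj with h | h
      · exact ha1 (Or.inl h)
      · simp at h
    · simp at hu
  | cons x rest ih =>
    intro D hD hoffs hsp i
    have hflat : (x :: rest).flatMap (blockL H spine) =
        blockL H spine x ++ rest.flatMap (blockL H spine) := by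
      simp [List.flatMap_cons]
    rcases le_or_gt i (offsL H spine x).length with hle | hlt
    · -- prefix inside the offs of `x`: every boundary vertex equals `x`
      have htake : ((x :: rest).flatMap (blockL H spine)).take i =
          (offsL H spine x).take i := by
        rw [hflat, blockL, List.append_assoc, List.take_append,
          Nat.sub_eq_zero_of_le hle, List.take_zero, List.append_nil]
      rw [htake]
      have key : ∀ v, (v ∉ D ∪ {w | w ∈ (offsL H spine x).take i} ∧
          ∃ u ∈ D ∪ {w | w ∈ (offsL H spine x).take i}, H.Adj u v) → v = x := by
        rintro v ⟨hv, u, hu, hadj⟩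
        rcases hu with hu | hu
        · rcases hD u hu v hadj with h | h
          · exact absurd (Or.inl h) hv
          · simpa using h.symm
        · exact hoffs x (by simp) u (List.take_subset _ _ hu) v hadj
      intro a ha b hb
      rw [key a ha, key b hb]
    · -- prefix contains the whole block of `x`: recurse
      have hklen : (blockL H spine x).length = (offsL H spine x).length + 1 := by
        simp [blockL]
      have hk : (blockL H spine x).length ≤ i := by omega
      have htake : ((x :: rest).flatMap (blockL H spine)).take i =
          blockL H spine x ++ (rest.flatMap (blockL H spine)).take
            (i - (blockL H spine x).length) := by
        rw [hflat, List.take_append, List.take_of_length_le hk]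
      set D' : Set W := D ∪ {w | w ∈ blockL H spine x} with hD'
      have hsetEq : D ∪ {w | w ∈ ((x :: rest).flatMap (blockL H spine)).take i} =
          D' ∪ {w | w ∈ (rest.flatMap (blockL H spine)).take
            (i - (blockL H spine x).length)} := by
        rw [htake]
        ext t
        simp only [hD', Set.mem_union, Set.mem_setOf_eq, List.mem_append]
        tauto
      rw [hsetEq]
      apply ih D'
      · -- boundary condition for D'
        intro w hw v hadj
        rcases hw with hw | hw
        · rcases hD w hw v hadj with h | h
          · exact Or.inl (Or.inl h)
          · simp only [List.head?_cons, Option.some.injEq] at h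
            refine Or.inl (Or.inr ?_)
            simp [blockL, ← h]
        · simp only [Set.mem_setOf_eq, blockL, List.mem_append, List.mem_singleton] at hw
          rcases hw with hw | rfl
          · have := hoffs x (by simp) w hw v hadj
            refine Or.inl (Or.inr ?_)
            simp [blockL, this]
          · rcases hsp.1 v hadj with h | h | h
            · exact Or.inl (Or.inl h)
            · exact Or.inl (Or.inr (by simp [blockL, h]))
            · exact Or.inr h
      · intro y hy
        exact hoffs y (by simp [hy])
      · exact hsp.2

end Caterpillar

section Caterpillar2

variable [Fintype W]

/-- Build the spine-chain condition along a path in an acyclic graph. -/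
lemma spok_of_walk (hac : H.IsAcyclic) (spine : List W) :
    ∀ {a b : W} (q : H.Walk a b), q.IsPath → (∀ t ∈ q.support, t ∈ spine) →
    ∀ D : Set W, (∀ v ∈ spine, v ∉ q.support → v ∈ D) →
    SpOK H spine q.support D := by
  intro a b q
  induction q with
  | nil =>
    intro hq hsub D hcov
    refine ⟨?_, trivial⟩
    intro v hadj
    by_cases hv : v ∈ spine
    · refine Or.inl (hcov v hv fun hvm => ?_)
      rw [SimpleGraph.Walk.support_nil, List.mem_singleton] at hvm
      exact H.ne_of_adj hadj hvm.symm
    · exact Or.inr (Or.inl (mem_offsL.mpr ⟨hv, hadj⟩))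
  | @cons a y b h q ihq =>
    intro hq hsub D hcov
    rw [SimpleGraph.Walk.support_cons]
    refine ⟨?_, ?_⟩
    · intro v hadj
      by_cases hv : v ∈ spine
      · by_cases hvs : v ∈ (q.cons h).support
        · right; right
          have := adj_head_eq_snd hac h q hq hvs hadj
          rw [this, SimpleGraph.Walk.support_eq_cons]
          rfl
        · exact Or.inl (hcov v hv hvs)
      · exact Or.inr (Or.inl (mem_offsL.mpr ⟨hv, hadj⟩))
    · apply ihq hq.of_cons
      · intro t ht
        exact hsub t (by simp [ht])
      · intro v hv hvq
        by_cases hva : v = a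
        · subst hva
          right
          simp [blockL]
        · left
          apply hcov v hv
          simp only [SimpleGraph.Walk.support_cons, List.mem_cons]
          push_neg
          exact ⟨hva, hvq⟩

variable {u v : W} {p : H.Walk u v}

/-- Every vertex off the spine has an adjacent spine vertex. -/
lemma off_spine_adj (htree : H.IsTree)
    (hdom : ∀ w : W, ∃ x ∈ p.support, H.dist w x ≤ 1) {w : W}
    (hw : w ∉ p.support) : ∃ x ∈ p.support, H.Adj w x := by
  obtain ⟨x, hx, hdist⟩ := hdom w
  have hne : w ≠ x := fun h => hw (h ▸ hx)
  have hpos : 0 < H.dist w x := htree.isConnected.pos_dist_of_ne hne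
  have h1 : H.dist w x = 1 := by omega
  obtain ⟨q, hq⟩ := htree.isConnected.exists_walk_length_eq_dist w x
  rw [h1] at hq
  have hadj : H.Adj (q.getVert 0) (q.getVert 1) := q.adj_getVert_succ (by omega)
  rw [SimpleGraph.Walk.getVert_zero] at hadj
  have : q.getVert 1 = x := by
    have := q.getVert_length
    rwa [hq] at this
  rw [this] at hadj
  exact ⟨x, hx, hadj⟩

/-- A vertex off the spine is adjacent to at most one spine vertex. -/
lemma off_spine_unique (htree : H.IsTree) (hp : p.IsPath) {w x y : W}
    (hw : w ∉ p.support) (hx : x ∈ p.support) (hy : y ∈ p.support)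
    (hwx : H.Adj w x) (hwy : H.Adj w y) : x = y := by
  by_contra hne
  obtain ⟨r, hr, hrsub⟩ := exists_path_support_subset p hp hx hy
  have hxw : x ≠ w := fun h => hw (h ▸ hx)
  have hwy' : w ≠ y := fun h => hw (h.symm ▸ hy)
  have hr2 : (SimpleGraph.Walk.cons hwx.symm (SimpleGraph.Walk.cons hwy
      (SimpleGraph.Walk.nil))).IsPath := by
    simp [SimpleGraph.Walk.isPath_def, hxw.symm, hwy', hne, hxw]
  have := htree.IsAcyclic.path_unique ⟨r, hr⟩ ⟨_, hr2⟩
  have hrw : w ∈ r.support := by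
    have : r = SimpleGraph.Walk.cons hwx.symm (SimpleGraph.Walk.cons hwy
        SimpleGraph.Walk.nil) := congrArg Subtype.val this
    rw [this]
    simp
  exact hw (hrsub w hrw)

/-- No edges between two off-spine vertices. -/
lemma off_spine_no_edge (htree : H.IsTree) (hp : p.IsPath)
    (hdom : ∀ w : W, ∃ x ∈ p.support, H.dist w x ≤ 1) {w z : W}
    (hw : w ∉ p.support) (hz : z ∉ p.support) (hadj : H.Adj w z) : False := by
  obtain ⟨x, hx, hwx⟩ := off_spine_adj htree hdom hw
  obtain ⟨y, hy, hzy⟩ := off_spine_adj htree hdom hz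
  have hxw : x ≠ w := fun h => hw (h ▸ hx)
  have hxz : x ≠ z := fun h => hz (h ▸ hx)
  have hyw : y ≠ w := fun h => hw (h ▸ hy)
  have hyz : y ≠ z := fun h => hz (h ▸ hy)
  by_cases hxy : x = y
  · subst hxy
    have h1 : (SimpleGraph.Path.singleton hadj : H.Walk w z).length = 1 := rfl
    have hr2 : (SimpleGraph.Walk.cons hwx (SimpleGraph.Walk.cons (hzy.symm)
        SimpleGraph.Walk.nil) : H.Walk w z).IsPath := by
      simp [SimpleGraph.Walk.isPath_def, hxw.symm, hxz, hxw, H.ne_of_adj hadj]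
    have := htree.IsAcyclic.path_unique (SimpleGraph.Path.singleton hadj) ⟨_, hr2⟩
    have hlen := congrArg (fun q : H.Path w z => q.1.length) this
    simp [SimpleGraph.Path.singleton] at hlen
  · obtain ⟨r, hr, hrsub⟩ := exists_path_support_subset p hp hx hy
    have hr2 : (SimpleGraph.Walk.cons hwx.symm (SimpleGraph.Walk.cons hadj
        (SimpleGraph.Walk.cons hzy SimpleGraph.Walk.nil)) : H.Walk x y).IsPath := by
      simp [SimpleGraph.Walk.isPath_def, hxw.symm, hxz, hxy, hxw, H.ne_of_adj hadj, hyw.symm, hyz.symm, hyw, hyz]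
    have := htree.IsAcyclic.path_unique ⟨r, hr⟩ ⟨_, hr2⟩
    have hrw : w ∈ r.support := by
      have heq : r = _ := congrArg Subtype.val this
      rw [heq]; simp
    exact hw (hrsub w hrw)

end Caterpillar2

section Caterpillar3

variable [Fintype W] {u v : W} {p : H.Walk u v}

/-- The sweeping list of a caterpillar. -/
def catList (H : SimpleGraph W) {u v : W} (p : H.Walk u v) : List W :=
  p.support.flatMap (blockL H p.support)

lemma catList_good (htree : H.IsTree) (hp : p.IsPath)
    (hdom : ∀ w : W, ∃ x ∈ p.support, H.dist w x ≤ 1) :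
    GoodL H (catList H p) ∧ ∀ w : W, w ∈ catList H p := by
  have hoffs : ∀ x ∈ p.support, ∀ w' ∈ offsL H p.support x, ∀ t, H.Adj w' t → t = x := by
    intro x hx w' hw' t hadj
    rw [mem_offsL] at hw'
    by_cases ht : t ∈ p.support
    · exact off_spine_unique htree hp hw'.1 ht hx hadj hw'.2.symm
    · exact absurd hadj (fun h => off_spine_no_edge htree hp hdom hw'.1 ht h)
  refine ⟨⟨?_, ?_⟩, ?_⟩
  · -- Nodup
    rw [catList, List.nodup_flatMap]
    constructor
    · intro x hx
      rw [blockL]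
      rw [List.nodup_append]
      refine ⟨Finset.nodup_toList _, List.nodup_singleton x, ?_⟩
      intro a ha b hax hab
      subst hab
      rw [List.mem_singleton] at hax
      subst hax
      rw [mem_offsL] at ha
      exact ha.1 hx
    · have hnd : p.support.Nodup := hp.support_nodup
      refine List.Pairwise.imp_of_mem ?_ hnd
      intro x y hx hy hne
      show (blockL H p.support x).Disjoint (blockL H p.support y)
      rw [List.disjoint_iff_ne]
      intro a ha b hb hab
      subst hab
      rw [blockL, List.mem_append, List.mem_singleton] at ha hb
      rcases ha with ha | rfl
      · rw [mem_offsL] at ha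
        rcases hb with hb | rfl
        · rw [mem_offsL] at hb
          exact hne (off_spine_unique htree hp ha.1 hx hy ha.2.symm hb.2.symm)
        · exact ha.1 hy
      · rcases hb with hb | rfl
        · rw [mem_offsL] at hb
          exact hb.1 hx
        · exact hne rfl
  · -- boundary subsingleton
    intro i
    have key := spok_guard (H := H) p.support p.support ∅
      (by intro u hu; exact absurd hu (Set.notMem_empty u))
      hoffs
      (spok_of_walk htree.IsAcyclic p.support p hp (fun t ht => ht) ∅
        (fun t ht hnt => absurd ht hnt)) i
    have hsets : (∅ : Set W) ∪ {w | w ∈ (p.support.flatMap (blockL H p.support)).take i} =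
        {w | w ∈ (catList H p).take i} := by
      rw [Set.empty_union, catList]
    rw [hsets] at key
    intro a ha b hb
    exact key ⟨ha.1, ha.2⟩ ⟨hb.1, hb.2⟩
  · -- coverage
    intro w
    rw [catList, List.mem_flatMap]
    by_cases hw : w ∈ p.support
    · exact ⟨w, hw, by simp [blockL]⟩
    · obtain ⟨x, hx, hadj⟩ := off_spine_adj htree hdom hw
      exact ⟨x, hx, by rw [blockL, List.mem_append, mem_offsL]; exact Or.inl ⟨hw, hadj.symm⟩⟩

end Caterpillar3

/-- Every vertex on a cycle has two distinct neighbours on the cycle. -/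
lemma cycle_two_neighbors {w : W} {c : H.Walk w w} (hc : c.IsCycle) {x : W}
    (hx : x ∈ c.support) :
    ∃ y ∈ c.support, ∃ z ∈ c.support, y ≠ z ∧ H.Adj x y ∧ H.Adj x z := by
  -- membership in support is invariant under rotation
  have hmemrot : ∀ t : W, t ∈ (c.rotate x hx).support ↔ t ∈ c.support := by
    have hperm := SimpleGraph.Walk.support_rotate c x hx
    have h1 : ∀ (a : W) (d : H.Walk a a), ¬d.Nil → ∀ t, t ∈ d.support ↔ t ∈ d.support.tail := by
      intro a d hd t
      cases d with
      | nil => simp at hd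
      | cons h q =>
        simp only [SimpleGraph.Walk.support_cons, List.tail_cons, List.mem_cons]
        constructor
        · rintro (rfl | h2)
          · exact SimpleGraph.Walk.end_mem_support q
          · exact h2
        · exact Or.inr
    have hcnil : ¬c.Nil := by
      intro h
      have := hc.three_le_length
      rw [SimpleGraph.Walk.nil_iff_length_eq.mp h] at this
      omega
    have hrotnil : ¬(c.rotate x hx).Nil := by
      intro h
      have := (hc.rotate hx).three_le_length
      rw [SimpleGraph.Walk.nil_iff_length_eq.mp h] at this
      omega
    intro t
    rw [h1 _ _ hrotnil t, h1 _ _ hcnil t]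
    exact hperm.perm.mem_iff
  set c' := c.rotate x hx with hc'def
  have hc' : c'.IsCycle := hc.rotate hx
  cases hcc : c' with
  | nil => exact absurd (hcc ▸ hc') (SimpleGraph.Walk.IsCycle.not_of_nil)
  | @cons _ y _ h q =>
    -- first neighbour: y
    have hy : y ∈ c.support := by
      rw [← hmemrot, hcc]
      simp [SimpleGraph.Walk.support_cons, SimpleGraph.Walk.start_mem_support]
    -- second neighbour: from the last edge
    have hqrev : ¬ q.reverse.Nil := by
      intro hnil
      rw [SimpleGraph.Walk.nil_iff_length_eq, SimpleGraph.Walk.length_reverse] at hnil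
      have := hc'.three_le_length
      rw [hcc] at this
      simp only [SimpleGraph.Walk.length_cons] at this
      omega
    cases hqq : q.reverse with
    | nil => rw [hqq] at hqrev; simp at hqrev
    | @cons _ z _ h2 q2 =>
      have hz : z ∈ c.support := by
        rw [← hmemrot, hcc]
        have : z ∈ q.reverse.support := by rw [hqq]; simp
        rw [SimpleGraph.Walk.support_reverse, List.mem_reverse] at this
        simp [SimpleGraph.Walk.support_cons, this]
      have hyz : y ≠ z := by
        intro hEq
        subst hEq
        have htrail : c'.IsTrail := hc'.isCircuit.isTrail
        have hnd := htrail.edges_nodup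
        rw [hcc] at hnd
        simp only [SimpleGraph.Walk.edges_cons, List.nodup_cons] at hnd
        apply hnd.1
        have : s(x, y) ∈ q.reverse.edges := by rw [hqq]; simp
        rw [SimpleGraph.Walk.edges_reverse, List.mem_reverse] at this
        exact this
      exact ⟨y, hy, z, hz, hyz, h, h2⟩

/-- A tree that is not a caterpillar contains a spider `S(2,2,2)`. -/
lemma spider_of_not_caterpillar [Fintype W] (htree : H.IsTree)
    (hnocat : ∀ (a b : W) (p : H.Walk a b), p.IsPath →
      ∃ w : W, ∀ x ∈ p.support, ¬ H.dist w x ≤ 1) :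
    ∃ ι : Fin 7 → W, Function.Injective ι ∧ ∀ x y, spAdj x y → H.Adj (ι x) (ι y) := by
  obtain ⟨u0⟩ := htree.isConnected.nonempty
  -- longest path
  set PS : Set ℕ := {n | ∃ (a b : W) (q : H.Walk a b), q.IsPath ∧ q.length = n} with hPS
  have hPSne : PS.Nonempty := ⟨0, u0, u0, SimpleGraph.Walk.nil, by simp, rfl⟩
  have hPSbdd : BddAbove PS := by
    refine ⟨Fintype.card W, ?_⟩
    rintro n ⟨a, b, q, hq, rfl⟩
    exact le_of_lt hq.length_lt
  obtain ⟨u, v, p, hp, hplen⟩ := Nat.sSup_mem hPSne hPSbdd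
  have hmax : ∀ (a b : W) (q : H.Walk a b), q.IsPath → q.length ≤ p.length := by
    intro a b q hq
    rw [hplen]
    exact le_csSup hPSbdd ⟨a, b, q, hq, rfl⟩
  -- a far-away vertex
  obtain ⟨w, hw⟩ := hnocat u v p hp
  have hwdist : ∀ x ∈ p.support, 2 ≤ H.dist w x := by
    intro x hx
    have := hw x hx
    omega
  -- minimal walk to the spine
  set MS : Set ℕ := {n | ∃ (x : W) (q : H.Walk w x), x ∈ p.support ∧ q.length = n} with hMS
  have hMSne : MS.Nonempty := by
    obtain ⟨q⟩ := htree.isConnected.preconnected w u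
    exact ⟨q.length, u, q, SimpleGraph.Walk.start_mem_support p, rfl⟩
  obtain ⟨x₀, q, hx₀, hqlen⟩ := Nat.sInf_mem hMSne
  have hmin : ∀ (x : W) (r : H.Walk w x), x ∈ p.support → q.length ≤ r.length := by
    intro x r hx
    rw [hqlen]
    exact Nat.sInf_le ⟨x, r, hx, rfl⟩
  have hq2 : 2 ≤ q.length := le_trans (hwdist x₀ hx₀) (SimpleGraph.dist_le q)
  -- extract z and z'
  have hrnil : ¬ q.reverse.Nil := by
    rw [SimpleGraph.Walk.nil_iff_length_eq, SimpleGraph.Walk.length_reverse]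
    omega
  obtain ⟨z, h1, r1, hr1⟩ : ∃ (z : W) (h1 : H.Adj x₀ z) (r1 : H.Walk z w),
      q.reverse = r1.cons h1 := by
    cases hqr : q.reverse with
    | nil => rw [hqr] at hrnil; simp at hrnil
    | cons h r => exact ⟨_, h, r, rfl⟩
  have hr1len : r1.length + 1 = q.length := by
    have := congrArg SimpleGraph.Walk.length hr1
    rw [SimpleGraph.Walk.length_reverse] at this
    simp only [SimpleGraph.Walk.length_cons] at this
    omega
  have hz : z ∉ p.support := by
    intro hmem
    have := hmin z r1.reverse hmem
    rw [SimpleGraph.Walk.length_reverse] at this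
    omega
  have hr1nil : ¬ r1.Nil := by
    rw [SimpleGraph.Walk.nil_iff_length_eq]
    omega
  obtain ⟨z', h2, r2, hr2⟩ : ∃ (z' : W) (h2 : H.Adj z z') (r2 : H.Walk z' w),
      r1 = r2.cons h2 := by
    cases hqr : r1 with
    | nil => rw [hqr] at hr1nil; simp at hr1nil
    | cons h r => exact ⟨_, h, r, rfl⟩
  have hr2len : r2.length + 2 = q.length := by
    have := congrArg SimpleGraph.Walk.length hr2
    simp only [SimpleGraph.Walk.length_cons] at this
    omega
  have hz' : z' ∉ p.support := by
    intro hmem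
    have := hmin z' r2.reverse hmem
    rw [SimpleGraph.Walk.length_reverse] at this
    omega
  -- split the path at x₀
  set p1 := p.takeUntil x₀ hx₀ with hp1
  set p2 := p.dropUntil x₀ hx₀ with hp2
  have hp1path : p1.IsPath := hp.takeUntil hx₀
  have hp2path : p2.IsPath := hp.dropUntil hx₀
  have hsplit : p1.append p2 = p := SimpleGraph.Walk.take_spec p hx₀
  have hlensum : p1.length + p2.length = p.length := by
    rw [← hsplit, SimpleGraph.Walk.length_append]
  -- both sides have length ≥ 2
  have hside : ∀ (e : W) (s : H.Walk x₀ e), s.IsPath →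
      (∀ t ∈ s.support, t ∈ p.support) → s.length + 2 ≤ p.length := by
    intro e s hs hsub
    have hzs : z ∉ s.support := fun hmem => hz (hsub z hmem)
    have hz's : z' ∉ s.support := fun hmem => hz' (hsub z' hmem)
    have hpath2 : (s.cons h1.symm).IsPath := hs.cons hzs
    have hpath3 : ((s.cons h1.symm).cons h2.symm).IsPath := by
      apply hpath2.cons
      rw [SimpleGraph.Walk.support_cons, List.mem_cons]
      push_neg
      exact ⟨(H.ne_of_adj h2).symm, hz's⟩
    have := hmax _ _ _ hpath3
    simp only [SimpleGraph.Walk.length_cons] at this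
    omega
  have hp1len : 2 ≤ p1.length := by
    have := hside v p2 hp2path (fun t ht => SimpleGraph.Walk.support_dropUntil_subset p hx₀ ht)
    omega
  have hp2len : 2 ≤ p2.length := by
    have h' := hside u p1.reverse hp1path.reverse (fun t ht => by
      rw [SimpleGraph.Walk.support_reverse, List.mem_reverse] at ht
      exact SimpleGraph.Walk.support_takeUntil_subset p hx₀ ht)
    rw [SimpleGraph.Walk.length_reverse] at h'
    omega
  -- extract the two legs along the path
  have leg : ∀ (e : W) (s : H.Walk x₀ e), s.IsPath → 2 ≤ s.length →
      ∃ a b : W, H.Adj x₀ a ∧ H.Adj a b ∧ a ∈ s.support ∧ b ∈ s.support ∧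
        a ≠ x₀ ∧ b ≠ x₀ ∧ a ≠ b := by
    intro e s hs hslen
    have hsnil : ¬ s.Nil := by rw [SimpleGraph.Walk.nil_iff_length_eq]; omega
    have hadj1 : H.Adj x₀ (s.getVert 1) := by
      have := s.adj_getVert_succ (show 0 < s.length by omega)
      rwa [SimpleGraph.Walk.getVert_zero] at this
    have hadj2 : H.Adj (s.getVert 1) (s.getVert 2) :=
      s.adj_getVert_succ (show 1 < s.length by omega)
    have hamem : s.getVert 1 ∈ s.support :=
      SimpleGraph.Walk.mem_support_iff_exists_getVert.mpr ⟨1, rfl, by omega⟩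
    have hbmem : s.getVert 2 ∈ s.support :=
      SimpleGraph.Walk.mem_support_iff_exists_getVert.mpr ⟨2, rfl, by omega⟩
    refine ⟨s.getVert 1, s.getVert 2, hadj1, hadj2, hamem, hbmem,
      (H.ne_of_adj hadj1).symm, ?_, H.ne_of_adj hadj2⟩
    intro hbx
    have htail : s.tail.support = s.support.tail :=
      SimpleGraph.Walk.support_tail_of_not_nil s hsnil
    have hx₀tail : x₀ ∉ s.support.tail := by
      have hnd : s.support.Nodup := hs.support_nodup
      rw [SimpleGraph.Walk.support_eq_cons] at hnd
      exact (List.nodup_cons.mp hnd).1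
    have htl : 1 ≤ s.tail.length := by
      have := SimpleGraph.Walk.length_tail_add_one hsnil
      omega
    have hmemtail : s.getVert 2 ∈ s.tail.support :=
      SimpleGraph.Walk.mem_support_iff_exists_getVert.mpr
        ⟨1, by rw [SimpleGraph.Walk.getVert_tail], htl⟩
    rw [htail, hbx] at hmemtail
    exact hx₀tail hmemtail
  obtain ⟨a1, b1, ha1adj, hb1adj, ha1mem, hb1mem, ha1ne, hb1ne, hab1⟩ :=
    leg u p1.reverse hp1path.reverse (by rw [SimpleGraph.Walk.length_reverse]; omega)
  obtain ⟨a2, b2, ha2adj, hb2adj, ha2mem, hb2mem, ha2ne, hb2ne, hab2⟩ :=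
    leg v p2 hp2path hp2len
  rw [SimpleGraph.Walk.support_reverse, List.mem_reverse] at ha1mem hb1mem
  -- supports of the two halves are disjoint away from x₀
  have hdisj : ∀ t, t ∈ p1.support → t ∈ p2.support → t = x₀ := by
    intro t ht1 ht2
    have hnd : (p1.append p2).support.Nodup := by rw [hsplit]; exact hp.support_nodup
    rw [SimpleGraph.Walk.support_append, List.nodup_append] at hnd
    by_contra htx
    have ht2' : t ∈ p2.support.tail := by
      rw [SimpleGraph.Walk.support_eq_cons] at ht2
      rcases List.mem_cons.mp ht2 with rfl | h
      · exact absurd rfl htx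
      · exact h
    exact hnd.2.2 t ht1 t ht2' rfl
  have h12 : ∀ s t : W, s ∈ p1.support → s ≠ x₀ → t ∈ p2.support → t ≠ x₀ → s ≠ t := by
    intro s t hs hsx ht htx hEq
    exact hsx (hdisj s hs (hEq ▸ ht))
  have hp1sub : ∀ t ∈ p1.support, t ∈ p.support :=
    fun t ht => SimpleGraph.Walk.support_takeUntil_subset p hx₀ ht
  have hp2sub : ∀ t ∈ p2.support, t ∈ p.support :=
    fun t ht => SimpleGraph.Walk.support_dropUntil_subset p hx₀ ht
  -- assemble the spider
  have hzx : z ≠ x₀ := fun h => hz (h ▸ hx₀)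
  have hz'x : z' ≠ x₀ := fun h => hz' (h ▸ hx₀)
  have hza1 : z ≠ a1 := fun h => hz (h ▸ hp1sub a1 ha1mem)
  have hza2 : z ≠ a2 := fun h => hz (h ▸ hp2sub a2 ha2mem)
  have hzb1 : z ≠ b1 := fun h => hz (h ▸ hp1sub b1 hb1mem)
  have hzb2 : z ≠ b2 := fun h => hz (h ▸ hp2sub b2 hb2mem)
  have hz'a1 : z' ≠ a1 := fun h => hz' (h ▸ hp1sub a1 ha1mem)
  have hz'a2 : z' ≠ a2 := fun h => hz' (h ▸ hp2sub a2 ha2mem)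
  have hz'b1 : z' ≠ b1 := fun h => hz' (h ▸ hp1sub b1 hb1mem)
  have hz'b2 : z' ≠ b2 := fun h => hz' (h ▸ hp2sub b2 hb2mem)
  have hzz' : z ≠ z' := H.ne_of_adj h2
  have ha1a2 : a1 ≠ a2 := h12 a1 a2 ha1mem ha1ne ha2mem ha2ne
  have ha1b2 : a1 ≠ b2 := h12 a1 b2 ha1mem ha1ne hb2mem hb2ne
  have hb1a2 : b1 ≠ a2 := h12 b1 a2 hb1mem hb1ne ha2mem ha2ne
  have hb1b2 : b1 ≠ b2 := h12 b1 b2 hb1mem hb1ne hb2mem hb2ne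
  set l : List W := [x₀, a1, a2, z, b1, b2, z'] with hl
  have hnd : l.Nodup := by
    refine List.nodup_cons.mpr ⟨?_, List.nodup_cons.mpr ⟨?_, List.nodup_cons.mpr ⟨?_,
      List.nodup_cons.mpr ⟨?_, List.nodup_cons.mpr ⟨?_, List.nodup_cons.mpr ⟨?_,
      List.nodup_singleton _⟩⟩⟩⟩⟩⟩
    · simp [ha1ne.symm, ha2ne.symm, hzx.symm, hb1ne.symm, hb2ne.symm, hz'x.symm]
    · simp [ha1a2, hza1.symm, hab1, ha1b2, hz'a1.symm]
    · simp [hza2.symm, hb1a2.symm, hab2, hz'a2.symm]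
    · simp [hzb1, hzb2, hzz']
    · simp [hb1b2, hz'b1.symm]
    · simp [hz'b2.symm]
  have hlen : l.length = 7 := rfl
  refine ⟨fun i => l.get (Fin.cast hlen.symm i), ?_, ?_⟩
  · exact (List.nodup_iff_injective_get.mp hnd).comp (Fin.cast_injective hlen.symm)
  · intro x y hxy
    simp only [spAdj, List.mem_cons, List.not_mem_nil, or_false, Prod.mk.injEq] at hxy
    rcases hxy with ⟨rfl, rfl⟩ | ⟨rfl, rfl⟩ | ⟨rfl, rfl⟩ | ⟨rfl, rfl⟩ | ⟨rfl, rfl⟩ |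
      ⟨rfl, rfl⟩ | ⟨rfl, rfl⟩ | ⟨rfl, rfl⟩ | ⟨rfl, rfl⟩ | ⟨rfl, rfl⟩ | ⟨rfl, rfl⟩ | ⟨rfl, rfl⟩
    · exact ha1adj
    · exact ha1adj.symm
    · exact ha2adj
    · exact ha2adj.symm
    · exact h1
    · exact h1.symm
    · exact hb1adj
    · exact hb1adj.symm
    · exact hb2adj
    · exact hb2adj.symm
    · exact h2
    · exact h2.symm

end TreePart

lemma GoodL.nil {G : SimpleGraph V} : GoodL G [] := by
  constructor
  · exact List.nodup_nil
  · intro i a ha b hb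
    simp only [List.take_nil, Set.mem_setOf_eq] at ha
    obtain ⟨-, u, hu, -⟩ := ha
    simp at hu

lemma supp_closed {G : SimpleGraph V} (c : G.ConnectedComponent) :
    ∀ u ∈ c.supp, ∀ v, G.Adj u v → v ∈ c.supp := by
  intro u hu v huv
  rw [SimpleGraph.ConnectedComponent.mem_supp_iff] at hu ⊢
  rw [← hu]
  exact SimpleGraph.ConnectedComponent.sound huv.symm.reachable

lemma connected_induce_supp {G : SimpleGraph V} (c : G.ConnectedComponent) :
    (G.induce c.supp).Connected := by
  obtain ⟨w, hw⟩ := c.exists_rep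
  have hwmem : w ∈ c.supp := by
    rw [SimpleGraph.ConnectedComponent.mem_supp_iff]
    exact hw
  apply SimpleGraph.induce_connected_of_patches w hwmem
  intro v hv
  rw [SimpleGraph.ConnectedComponent.mem_supp_iff] at hv
  have hreach : G.Reachable w v := by
    have : G.connectedComponentMk w = G.connectedComponentMk v := by
      rw [hv]; exact hw
    exact SimpleGraph.ConnectedComponent.eq.mp this
  obtain ⟨q⟩ := hreach
  refine ⟨{x | x ∈ q.support}, ?_, ?_, ?_, ?_⟩
  · intro x hx
    rw [SimpleGraph.ConnectedComponent.mem_supp_iff]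
    have hr : G.Reachable w x := ⟨q.takeUntil x hx⟩
    rw [show c = G.connectedComponentMk w from hw.symm]
    exact SimpleGraph.ConnectedComponent.sound hr.symm
  · simp
  · simp
  · exact (q.connected_induce_support).preconnected _ _

/-- Assemble per-component good lists into a global one. -/
lemma global_goodL [Fintype V] {G : SimpleGraph V}
    (hcomp : ∀ c : G.ConnectedComponent, ∃ L : List V, GoodL G L ∧
      (∀ w, w ∈ L ↔ w ∈ c.supp)) :
    ∃ L : List V, GoodL G L ∧ ∀ w : V, w ∈ L := by
  choose f hf using hcomp
  have main : ∀ cs : List G.ConnectedComponent, cs.Nodup →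
      GoodL G (cs.flatMap f) ∧ ∀ w, w ∈ cs.flatMap f ↔ ∃ c ∈ cs, w ∈ c.supp := by
    intro cs
    induction cs with
    | nil =>
      intro _
      refine ⟨GoodL.nil, ?_⟩
      simp
    | cons c rest ih =>
      intro hnd
      rw [List.nodup_cons] at hnd
      obtain ⟨hgood, hmem⟩ := ih hnd.2
      rw [List.flatMap_cons]
      constructor
      · apply (hf c).1.append hgood
        · intro w hw hw2
          rw [(hf c).2] at hw
          rw [hmem] at hw2
          obtain ⟨d, hd, hwd⟩ := hw2
          rw [SimpleGraph.ConnectedComponent.mem_supp_iff] at hw hwd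
          have : c = d := by rw [← hw, hwd]
          subst this
          exact hnd.1 hd
        · intro a ha v hav
          rw [(hf c).2] at ha ⊢
          exact supp_closed c a ha v hav
      · intro w
        rw [List.mem_append, hmem, (hf c).2]
        constructor
        · rintro (h | ⟨d, hd, hwd⟩)
          exacts [⟨c, by simp, h⟩, ⟨d, by simp [hd], hwd⟩]
        · rintro ⟨d, hd, hwd⟩
          rcases List.mem_cons.mp hd with rfl | hd
          exacts [Or.inl hwd, Or.inr ⟨d, hd, hwd⟩]
  obtain ⟨hgood, hmem⟩ := main (Finset.univ.toList) (Finset.nodup_toList _)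
  refine ⟨_, hgood, fun w => ?_⟩
  rw [hmem]
  exact ⟨G.connectedComponentMk w, by simp, by rw [SimpleGraph.ConnectedComponent.mem_supp_iff]⟩

/-! ### Final assembly -/

/-- If 2 firefighters win, every connected component is a caterpillar. -/
lemma caterpillar_of_winnable_two [Fintype V] (G : SimpleGraph V)
    (hwin : ∃ T F, WinningStrategy G 2 T F) (c : G.ConnectedComponent) :
    IsCaterpillar (G.induce c.supp) := by
  set H := G.induce c.supp with hH
  have hconn : H.Connected := connected_induce_supp c
  have hval : ∀ a b : ↥(c.supp), H.Adj a b → G.Adj ↑a ↑b := by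
    intro a b hab
    exact hab
  have hacyc : H.IsAcyclic := by
    intro w0 cyc hcyc
    apply not_winnable_two_of_robust G ((cyc.support.map Subtype.val).toFinset) ?_ ?_ hwin
    · rw [List.toFinset_nonempty_iff]
      intro h
      have := cyc.start_mem_support
      have : (w0 : V) ∈ cyc.support.map Subtype.val := List.mem_map.mpr ⟨w0, this, rfl⟩
      rw [h] at this
      simp at this
    · intro x hx
      rw [List.mem_toFinset, List.mem_map] at hx
      obtain ⟨x', hx', rfl⟩ := hx
      obtain ⟨y, hy, z, hz, hyz, hxy, hxz⟩ := cycle_two_neighbors hcyc hx'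
      refine ⟨↑y, ?_, ↑z, ?_, ?_, hval _ _ hxy, hval _ _ hxz⟩
      · rw [List.mem_toFinset, List.mem_map]; exact ⟨y, hy, rfl⟩
      · rw [List.mem_toFinset, List.mem_map]; exact ⟨z, hz, rfl⟩
      · exact fun h => hyz (Subtype.val_injective h)
  have htree : H.IsTree := ⟨hconn, hacyc⟩
  refine ⟨htree, ?_⟩
  by_contra hnodom
  push_neg at hnodom
  have hnocat : ∀ (a b : ↥(c.supp)) (p : H.Walk a b), p.IsPath →
      ∃ w : ↥(c.supp), ∀ x ∈ p.support, ¬ H.dist w x ≤ 1 := by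
    intro a b p hp
    have h' := hnodom a b p hp
    obtain ⟨w, hw⟩ := h'
    exact ⟨w, fun x hx => by have := hw x hx; omega⟩
  obtain ⟨ι, hinj, hadj⟩ := spider_of_not_caterpillar htree hnocat
  exact not_winnable_two_of_spider G (fun i => ↑(ι i))
    (fun i j hij => hinj (Subtype.val_injective hij))
    (fun x y hxy => hval _ _ (hadj x y hxy)) hwin

/-- If every connected component is a caterpillar, 2 firefighters win. -/
lemma winnable_two_of_caterpillar [Fintype V] (G : SimpleGraph V)
    (hcat : ∀ c : G.ConnectedComponent, IsCaterpillar (G.induce c.supp)) :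
    ∃ T F, WinningStrategy G 2 T F := by
  have hcomp : ∀ c : G.ConnectedComponent, ∃ L : List V, GoodL G L ∧
      (∀ w, w ∈ L ↔ w ∈ c.supp) := by
    intro c
    obtain ⟨htree, u, v, p, hp, hdom⟩ := hcat c
    obtain ⟨hgood, hcov⟩ := catList_good htree hp hdom
    refine ⟨(catList (G.induce c.supp) p).map Subtype.val, ?_, ?_⟩
    · exact hgood.map_val (supp_closed c)
    · intro w
      rw [List.mem_map]
      constructor
      · rintro ⟨x, -, rfl⟩
        exact x.2
      · intro hw
        exact ⟨⟨w, hw⟩, hcov ⟨w, hw⟩, rfl⟩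
  obtain ⟨L, hgood, hcov⟩ := global_goodL hcomp
  exact winnable_two_of_goodL G L hgood hcov

/-- Characterization: `ffn G = 2` iff `G` has at least one edge and every connected
component of `G` is a caterpillar. -/
theorem ffn_eq_two_iff [Fintype V] (G : SimpleGraph V) :
    ffn G = 2 ↔ G.edgeSet.Nonempty ∧
      ∀ c : G.ConnectedComponent, IsCaterpillar (G.induce c.supp) := by
  set S : Set ℕ := {m | ∃ T F, WinningStrategy G m T F} with hSdef
  have hSne : S.Nonempty := ⟨Fintype.card V, winnable_card G⟩
  constructor
  · intro hffn
    have h2 : 2 ∈ S := by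
      have := Nat.sInf_mem hSne
      rwa [show sInf S = 2 from hffn] at this
    have h1 : 1 ∉ S := by
      intro h
      have := Nat.sInf_le h
      rw [show sInf S = 2 from hffn] at this
      omega
    constructor
    · by_contra hne
      rw [Set.not_nonempty_iff_eq_empty] at hne
      exact h1 (winnable_one_of_no_edge G hne)
    · exact caterpillar_of_winnable_two G h2
  · rintro ⟨hedge, hcat⟩
    have h2 : 2 ∈ S := winnable_two_of_caterpillar G hcat
    have h1 : 1 ∉ S := not_winnable_one_of_edge G hedge
    have hle : sInf S ≤ 2 := Nat.sInf_le h2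
    have hge : 2 ≤ sInf S := by
      by_contra hlt
      push_neg at hlt
      have hmem : sInf S ∈ S := Nat.sInf_mem hSne
      have : 1 ∈ S := winnable_mono (by omega) hmem
      exact h1 this
    show sInf S = 2
    omega
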